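/- Let R be of type E_7, set v_4 := s_1 s_3 s_4 s_5 s_2 s_4 s_3 s_6 s_5 s_4 s_1 s_2 s_3 s_7 s_6 s_5 s_4, and for i ≠ 7 define w_i := w_{0, S∖{α_1, α_i}} w_{0, S∖{α_1}} v_4 (so w_1 = v_4). Then for each i ∈ {1, …, 6}: w_i^{-1}(α_j) is a positive root for every simple root α_j with j ≠ i, and w_i^{-1}(α_i) is a negative root. -/

import Mathlib

noncomputable section

open scoped Classical

local notation "⟪" x ", " y "⟫" => @inner ℝ _ _ x y

namespace PaperFormal

variable (V : Type*) [NormedAddCommGroup V] [InnerProductSpace ℝ V] [FiniteDimensional ℝ V]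

/-- The reflection of the Euclidean space `V` in the hyperplane orthogonal to `v`,
i.e. `β ↦ β - (2⟪β,v⟫/⟪v,v⟫) v`. -/
def sref (v : V) : V ≃ₗᵢ[ℝ] V := Submodule.reflection (ℝ ∙ v)ᗮ

/-- A reduced irreducible crystallographic root system `R` in the Euclidean space `V`,
together with a fixed base of simple roots `a 1, …, a n`. -/
structure RootSystemWithBase (n : ℕ) : Type _ where
  /-- the set of roots -/
  R : Set V
  /-- the simple roots `a 1, …, a n` (values outside `{1, …, n}` are irrelevant) -/
  a : ℕ → V
  finite : R.Finite
  ne_zero : ∀ β ∈ R, β ≠ 0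
  refl_mem : ∀ α ∈ R, ∀ β ∈ R, sref V α β ∈ R
  crystallographic : ∀ α ∈ R, ∀ β ∈ R, ∃ k : ℤ, 2 * ⟪β, α⟫ / ⟪α, α⟫ = (k : ℝ)
  reduced : ∀ α ∈ R, ∀ t : ℝ, t • α ∈ R → t = 1 ∨ t = -1
  irreducible : ∀ P : Set V, (∀ x ∈ R, ∀ y ∈ R, x ∈ P → ⟪x, y⟫ ≠ 0 → y ∈ P) →
      (R ∩ P).Nonempty → R ⊆ P
  simple_mem : ∀ i ∈ Finset.Icc 1 n, a i ∈ R
  indep : LinearIndependent ℝ (fun i : (Set.Icc 1 n : Set ℕ) => a i)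
  span_top : Submodule.span ℝ (a '' Set.Icc 1 n) = ⊤
  root_combo : ∀ β ∈ R, ∃ c : ℕ → ℤ, ((∀ i, 0 ≤ c i) ∨ (∀ i, c i ≤ 0)) ∧
      β = ∑ i ∈ Finset.Icc 1 n, (c i : ℝ) • a i

namespace RootSystemWithBase

variable {V} {n : ℕ} (S : RootSystemWithBase V n)

/-- The simple reflection `s i` associated to the simple root `a i`. -/
def s (i : ℕ) : V ≃ₗᵢ[ℝ] V := sref V (S.a i)

/-- The product of the simple reflections along a list of indices
(leftmost factor acting last). -/
def prodW (l : List ℕ) : V ≃ₗᵢ[ℝ] V := (l.map S.s).prod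

/-- The parabolic subgroup `W_J` of the Weyl group generated by the simple reflections
`s i` for `i ∈ J`. -/
def WJ (J : Set ℕ) : Subgroup (V ≃ₗᵢ[ℝ] V) :=
  Subgroup.closure (S.s '' (J ∩ Set.Icc 1 n))

/-- The Weyl group `W`, generated by all simple reflections. -/
def W : Subgroup (V ≃ₗᵢ[ℝ] V) := S.WJ Set.univ

/-- The length of `w` with respect to the simple reflections indexed by `J`:
the least length of a word in these reflections expressing `w`. -/
def lenJ (J : Set ℕ) (w : V ≃ₗᵢ[ℝ] V) : ℕ :=
  sInf {k | ∃ l : List ℕ, (∀ i ∈ l, i ∈ J ∩ Set.Icc 1 n) ∧ l.length = k ∧ w = S.prodW l}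

/-- The length function `ℓ` of the Weyl group. -/
def len (w : V ≃ₗᵢ[ℝ] V) : ℕ := S.lenJ Set.univ w

/-- `w` is the longest element `w_{0,J}` of the parabolic subgroup `W_J`. -/
def IsLongest (J : Set ℕ) (w : V ≃ₗᵢ[ℝ] V) : Prop :=
  w ∈ S.WJ J ∧ ∀ x ∈ S.WJ J, S.lenJ J x ≤ S.lenJ J w

/-- `β` is a positive root (with respect to the base `a`). -/
def IsPos (β : V) : Prop :=
  β ∈ S.R ∧ ∃ c : ℕ → ℝ, (∀ i, 0 ≤ c i) ∧ β = ∑ i ∈ Finset.Icc 1 n, c i • S.a i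

/-- `β` is a negative root. -/
def IsNeg (β : V) : Prop := S.IsPos (-β)

/-- `h` is the highest root `α_0`: a root such that `h - β` is a nonnegative combination of
the simple roots for every root `β`. -/
def IsHighest (h : V) : Prop :=
  h ∈ S.R ∧ ∀ β ∈ S.R, ∃ c : ℕ → ℝ, (∀ i, 0 ≤ c i) ∧
    h - β = ∑ i ∈ Finset.Icc 1 n, c i • S.a i

/-- The root system is simply laced: all roots have the same length. -/
def SimplyLaced : Prop := ∀ α ∈ S.R, ∀ β ∈ S.R, ⟪α, α⟫ = ⟪β, β⟫

/-- `ω` is the fundamental weight `ω_r` dual to the simple root `a r`: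
`⟨ω, a j⟩ = δ_{rj}` for `1 ≤ j ≤ n`. -/
def IsFundamental (r : ℕ) (ω : V) : Prop :=
  ∀ j ∈ Finset.Icc 1 n, 2 * ⟪ω, S.a j⟫ / ⟪S.a j, S.a j⟫ = if j = r then 1 else 0

/-- A weight `ω` is minuscule: `⟨ω, β⟩ ≤ 1` for every positive root `β`. -/
def Minuscule (ω : V) : Prop := ∀ β, S.IsPos β → 2 * ⟪ω, β⟫ / ⟪β, β⟫ ≤ 1

end RootSystemWithBase

variable {V}

/-- Adjacency in the Dynkin diagram of type `E_n` (`n = 6, 7, 8`, Bourbaki labeling):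
`α_2` is the branch node attached to `α_4`; `α_1, α_3, α_4, …, α_n` form a chain. -/
def adjE (i j : ℕ) : Prop :=
  (i, j) ∈ ([(1,3),(3,4),(2,4),(4,5),(5,6),(6,7),(7,8)] : List (ℕ × ℕ)) ∨
  (j, i) ∈ ([(1,3),(3,4),(2,4),(4,5),(5,6),(6,7),(7,8)] : List (ℕ × ℕ))

/-- The element `v_4 = s_1 s_3 s_4 s_5 s_2 s_4 s_3 s_6 s_5 s_4 s_1 s_2 s_3 s_7 s_6 s_5 s_4`
of the Weyl group of `E_7`. -/
def v4E7 (S : RootSystemWithBase V 7) : V ≃ₗᵢ[ℝ] V :=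
  S.prodW [1, 3, 4, 5, 2, 4, 3, 6, 5, 4, 1, 2, 3, 7, 6, 5, 4]

set_option maxRecDepth 40000
set_option maxHeartbeats 1000000
set_option linter.unusedSectionVars false

/-! ### Auxiliary development -/

section Aux

open RootSystemWithBase

/-! #### Reflection basics -/

theorem aux_sref_apply (v x : V) : sref V v x = x - (2 * ⟪x, v⟫ / ⟪v, v⟫) • v := by
  rw [sref, Submodule.reflection_orthogonal_apply, Submodule.reflection_singleton_apply,
    real_inner_self_eq_norm_sq, real_inner_comm]
  simp only [RCLike.ofReal_real_eq_id, id_eq]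
  match_scalars <;> ring

theorem aux_sref_conj (f : V ≃ₗᵢ[ℝ] V) (v : V) : f * sref V v * f⁻¹ = sref V (f v) := by
  ext x
  have h1 : ⟪f.symm x, v⟫ = ⟪x, f v⟫ := by
    conv_lhs => rw [← f.inner_map_map (f.symm x) v, f.apply_symm_apply]
  have h2 : ⟪v, v⟫ = ⟪f v, f v⟫ := (f.inner_map_map v v).symm
  have h3 : (f⁻¹ : V ≃ₗᵢ[ℝ] V) x = f.symm x := rfl
  simp only [LinearIsometryEquiv.coe_mul, Function.comp_apply, h3, aux_sref_apply, map_sub,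
    map_smul, h1, ← h2, f.apply_symm_apply]

theorem aux_sref_sq (v : V) : sref V v * sref V v = 1 := Submodule.reflection_mul_reflection _

theorem aux_sref_self (v : V) (hv : v ≠ 0) : sref V v v = -v := by
  rw [aux_sref_apply]
  have h : ⟪v, v⟫ ≠ 0 := by simpa using hv
  field_simp
  module

/-! #### Basic root system facts, n = 7 -/

variable (S : RootSystemWithBase V 7)

theorem aux_mem_finIcc {k : ℕ} (hk : k ∈ Set.Icc 1 7) : k ∈ Finset.Icc (1:ℕ) 7 := by
  simpa [Finset.mem_Icc, Set.mem_Icc] using hk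

theorem aux_coeff_eq {x y : ℕ → ℝ}
    (h : ∑ k ∈ Finset.Icc 1 7, x k • S.a k = ∑ k ∈ Finset.Icc 1 7, y k • S.a k) :
    ∀ k ∈ Finset.Icc (1:ℕ) 7, x k = y k := by
  have h0 : ∑ k ∈ Finset.Icc 1 7, (x k - y k) • S.a k = 0 := by
    simp only [sub_smul, Finset.sum_sub_distrib, h, sub_self]
  have hconv : ∑ i : (Set.Icc 1 7 : Set ℕ), (x i - y i) • S.a i = 0 := by
    rw [Finset.sum_set_coe (f := fun k => (x k - y k) • S.a k), Set.toFinset_Icc]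
    exact h0
  have := Fintype.linearIndependent_iff.mp S.indep (fun i => x i - y i) hconv
  intro k hk
  have hk' : k ∈ (Set.Icc 1 7 : Set ℕ) := by simpa [Set.mem_Icc, Finset.mem_Icc] using hk
  have h5 : x k - y k = 0 := this ⟨k, hk'⟩
  linarith

theorem aux_a_mem (k : ℕ) (hk : k ∈ Finset.Icc (1:ℕ) 7) : S.a k ∈ S.R := S.simple_mem k hk

theorem aux_a_ne (k : ℕ) (hk : k ∈ Finset.Icc (1:ℕ) 7) : S.a k ≠ 0 :=
  S.ne_zero _ (aux_a_mem S k hk)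

theorem aux_neg_mem {β : V} (hβ : β ∈ S.R) : -β ∈ S.R := by
  have := S.refl_mem β hβ β hβ
  rwa [aux_sref_self β (S.ne_zero β hβ)] at this

theorem aux_isNeg_mem {β : V} (h : S.IsNeg β) : β ∈ S.R := by
  have : -β ∈ S.R := h.1
  simpa using aux_neg_mem S this

theorem aux_pos_or_neg {β : V} (hβ : β ∈ S.R) : S.IsPos β ∨ S.IsNeg β := by
  obtain ⟨c, hc, hsum⟩ := S.root_combo β hβ
  rcases hc with hc | hc
  · left
    refine ⟨hβ, fun k => ((c k : ℤ) : ℝ), fun k => ?_, hsum⟩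
    show (0:ℝ) ≤ ((c k : ℤ) : ℝ)
    exact_mod_cast hc k
  · right
    refine ⟨aux_neg_mem S hβ, fun k => ((-c k : ℤ) : ℝ), fun k => ?_, ?_⟩
    · show (0:ℝ) ≤ ((-c k : ℤ) : ℝ)
      exact_mod_cast neg_nonneg.mpr (hc k)
    · rw [hsum, ← Finset.sum_neg_distrib]
      refine Finset.sum_congr rfl fun k _ => ?_
      push_cast
      module

theorem aux_not_pos_neg {β : V} (h1 : S.IsPos β) (h2 : S.IsNeg β) : False := by
  obtain ⟨hβR, c, hc, hcs⟩ := h1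
  obtain ⟨_, d, hd, hds⟩ := h2
  have hzero : ∑ k ∈ Finset.Icc 1 7, (c k + d k) • S.a k
      = ∑ k ∈ Finset.Icc 1 7, (0:ℝ) • S.a k := by
    simp only [add_smul, Finset.sum_add_distrib, ← hcs, ← hds, zero_smul,
      Finset.sum_const_zero, add_neg_cancel]
  have hck := aux_coeff_eq S hzero
  have : β = 0 := by
    rw [hcs]
    refine Finset.sum_eq_zero fun k hk => ?_
    have h1 := hck k hk
    have h2 := hc k
    have h3 := hd k
    have : c k = 0 := by linarith
    simp [this]
  exact S.ne_zero β hβR this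

theorem aux_isPos_simple (k : ℕ) (hk : k ∈ Finset.Icc (1:ℕ) 7) : S.IsPos (S.a k) := by
  refine ⟨aux_a_mem S k hk, fun m => if m = k then 1 else 0, fun m => by positivity, ?_⟩
  rw [Finset.sum_eq_single_of_mem k hk]
  · simp
  · intro m _ hm
    simp [hm]

/-! #### Simple reflections and words -/

theorem aux_s_apply (i : ℕ) (x : V) :
    S.s i x = x - (2 * ⟪x, S.a i⟫ / ⟪S.a i, S.a i⟫) • S.a i := aux_sref_apply _ _

theorem aux_s_sq (i : ℕ) : S.s i * S.s i = 1 := aux_sref_sq _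

theorem aux_s_inv (i : ℕ) : (S.s i)⁻¹ = S.s i := by
  rw [← mul_eq_one_iff_inv_eq]
  exact aux_s_sq S i

theorem aux_s_simple (k : ℕ) (hk : k ∈ Finset.Icc (1:ℕ) 7) : S.s k (S.a k) = -S.a k :=
  aux_sref_self _ (aux_a_ne S k hk)

theorem aux_prodW_nil : S.prodW [] = 1 := rfl

theorem aux_prodW_cons (i : ℕ) (l : List ℕ) : S.prodW (i :: l) = S.s i * S.prodW l := by
  simp [prodW]

theorem aux_prodW_singleton (i : ℕ) : S.prodW [i] = S.s i := by
  simp [prodW]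

theorem aux_prodW_append (l₁ l₂ : List ℕ) :
    S.prodW (l₁ ++ l₂) = S.prodW l₁ * S.prodW l₂ := by
  simp [prodW]

theorem aux_prodW_inv (l : List ℕ) : (S.prodW l)⁻¹ = S.prodW l.reverse := by
  induction l with
  | nil => simp [prodW]
  | cons i t ih =>
    rw [aux_prodW_cons, mul_inv_rev, ih, aux_s_inv, List.reverse_cons, aux_prodW_append,
      aux_prodW_singleton]

theorem aux_prodW_mem_R {l : List ℕ} (hl : ∀ k ∈ l, k ∈ Finset.Icc (1:ℕ) 7)
    {β : V} (hβ : β ∈ S.R) : S.prodW l β ∈ S.R := by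
  induction l with
  | nil => simpa [prodW] using hβ
  | cons i t ih =>
    rw [aux_prodW_cons]
    have h1 : S.prodW t β ∈ S.R := ih (fun k hk => hl k (List.mem_cons_of_mem _ hk))
    have h2 : S.a i ∈ S.R := aux_a_mem S i (hl i (List.mem_cons_self ..))
    have := S.refl_mem _ h2 _ h1
    simpa [RootSystemWithBase.s] using this

theorem aux_mem_WJ {J : Set ℕ} {l : List ℕ} (hl : ∀ k ∈ l, k ∈ J ∩ Set.Icc 1 7) :
    S.prodW l ∈ S.WJ J := by
  induction l with
  | nil => exact (S.WJ J).one_mem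
  | cons i t ih =>
    rw [aux_prodW_cons]
    refine mul_mem ?_ (ih fun k hk => hl k (List.mem_cons_of_mem _ hk))
    exact Subgroup.subset_closure ⟨i, hl i (List.mem_cons_self ..), rfl⟩

theorem aux_WJ_word {J : Set ℕ} {w : V ≃ₗᵢ[ℝ] V} (hw : w ∈ S.WJ J) :
    ∃ l : List ℕ, (∀ k ∈ l, k ∈ J ∩ Set.Icc 1 7) ∧ w = S.prodW l := by
  induction hw using Subgroup.closure_induction with
  | mem x hx =>
    obtain ⟨i, hi, rfl⟩ := hx
    exact ⟨[i], by simpa using hi, (aux_prodW_singleton S i).symm⟩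
  | one => exact ⟨[], by simp, rfl⟩
  | mul x y _ _ hx hy =>
    obtain ⟨l₁, hl₁, rfl⟩ := hx
    obtain ⟨l₂, hl₂, rfl⟩ := hy
    refine ⟨l₁ ++ l₂, ?_, (aux_prodW_append S l₁ l₂).symm⟩
    intro k hk
    rcases List.mem_append.mp hk with h | h
    · exact hl₁ k h
    · exact hl₂ k h
  | inv x _ hx =>
    obtain ⟨l, hl, rfl⟩ := hx
    exact ⟨l.reverse, fun k hk => hl k (List.mem_reverse.mp hk), aux_prodW_inv S l⟩

end Aux

section Aux2

open RootSystemWithBase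

variable (S : RootSystemWithBase V 7)

/-- If `β` is a positive root and `s_j β` is negative, then `β = a j`. -/
theorem aux_eq_simple {j : ℕ} (hj : j ∈ Finset.Icc (1:ℕ) 7) {β : V}
    (hpos : S.IsPos β) (hneg : S.IsNeg (S.s j β)) : β = S.a j := by
  obtain ⟨hβR, c, hc0, hcsum⟩ := hpos
  obtain ⟨hnR, d, hd0, hdsum⟩ := hneg
  set r : ℝ := 2 * ⟪β, S.a j⟫ / ⟪S.a j, S.a j⟫ with hr
  have hsj : S.s j β = ∑ k ∈ Finset.Icc 1 7, (c k - (if k = j then r else 0)) • S.a k := by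
    have h1 : (r • S.a j : V) = ∑ k ∈ Finset.Icc 1 7, (if k = j then r else 0) • S.a k := by
      rw [Finset.sum_eq_single_of_mem j hj (fun m _ hm => by simp [hm])]; simp
    rw [aux_s_apply, ← hr, h1]
    conv_lhs => rw [hcsum]
    rw [← Finset.sum_sub_distrib]
    exact Finset.sum_congr rfl fun k _ => by rw [sub_smul]
  have hsj' : S.s j β = ∑ k ∈ Finset.Icc 1 7, (-(d k)) • S.a k := by
    have : -(S.s j β) = ∑ k ∈ Finset.Icc 1 7, d k • S.a k := hdsum
    rw [← neg_neg (S.s j β), this, ← Finset.sum_neg_distrib]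
    exact Finset.sum_congr rfl fun k _ => by rw [neg_smul]
  have hck := aux_coeff_eq S (hsj ▸ hsj')
  have hzero : ∀ k ∈ Finset.Icc (1:ℕ) 7, k ≠ j → c k = 0 := by
    intro k hk hkj
    have h1 := hck k hk
    simp only [if_neg hkj] at h1
    have h2 := hc0 k
    have h3 := hd0 k
    linarith
  have hβj : β = c j • S.a j := by
    rw [hcsum, Finset.sum_eq_single_of_mem j hj]
    intro m hm hmj
    rw [hzero m hm hmj, zero_smul]
  have := S.reduced (S.a j) (aux_a_mem S j hj) (c j) (hβj ▸ hβR)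
  rcases this with h | h
  · rw [hβj, h, one_smul]
  · exfalso; have := hc0 j; rw [h] at this; linarith

/-- The key exchange-type lemma. -/
theorem aux_key {J : Set ℕ} : ∀ (l : List ℕ), (∀ k ∈ l, k ∈ J ∩ Set.Icc 1 7) →
    ∀ i, i ∈ J ∩ Set.Icc 1 7 → S.IsNeg (S.prodW l (S.a i)) →
    ∃ l' : List ℕ, (∀ k ∈ l', k ∈ J ∩ Set.Icc 1 7) ∧ l'.length + 1 = l.length ∧
      S.prodW l * S.s i = S.prodW l' := by
  intro l
  induction l with
  | nil =>
    intro _ i hi hneg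
    exfalso
    have : S.prodW [] (S.a i) = S.a i := by rw [aux_prodW_nil]; rfl
    rw [this] at hneg
    exact aux_not_pos_neg S (aux_isPos_simple S i (aux_mem_finIcc hi.2)) hneg
  | cons j t ih =>
    intro hl i hi hneg
    have hjJ : j ∈ J ∩ Set.Icc 1 7 := hl j (List.mem_cons_self ..)
    have htl : ∀ k ∈ t, k ∈ J ∩ Set.Icc 1 7 := fun k hk => hl k (List.mem_cons_of_mem _ hk)
    have hut : S.prodW t (S.a i) ∈ S.R :=
      aux_prodW_mem_R S (fun k hk => aux_mem_finIcc (htl k hk).2)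
        (aux_a_mem S i (aux_mem_finIcc hi.2))
    have happ : S.prodW (j :: t) (S.a i) = S.s j (S.prodW t (S.a i)) := by
      rw [aux_prodW_cons]; rfl
    rcases aux_pos_or_neg S hut with hpos | hneg'
    · -- the positive case : prodW t (a i) = a j
      have heq : S.prodW t (S.a i) = S.a j := by
        refine aux_eq_simple S (aux_mem_finIcc hjJ.2) hpos ?_
        rw [← happ]; exact hneg
      refine ⟨t, htl, by simp, ?_⟩
      have hc : S.prodW t * S.s i * (S.prodW t)⁻¹ = S.s j := by
        have := aux_sref_conj (S.prodW t) (S.a i)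
        rw [show sref V (S.a i) = S.s i from rfl] at this
        rw [this, heq]; rfl
      have hswap : S.prodW t * S.s i = S.s j * S.prodW t := by
        rw [← hc]; group
      rw [aux_prodW_cons, mul_assoc, hswap, ← mul_assoc, aux_s_sq, one_mul]
    · -- the negative case : use the induction hypothesis
      obtain ⟨t', ht', hlen, heq⟩ := ih htl i hi hneg'
      refine ⟨j :: t', fun k hk => by
        rcases List.mem_cons.mp hk with h | h
        · exact h ▸ hjJ
        · exact ht' k h, by simpa using hlen, ?_⟩
      rw [aux_prodW_cons, mul_assoc, heq, ← aux_prodW_cons]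

/-! #### Length and longest elements -/

theorem aux_lenJ_le {J : Set ℕ} {w : V ≃ₗᵢ[ℝ] V} {l : List ℕ}
    (hl : ∀ k ∈ l, k ∈ J ∩ Set.Icc 1 7) (hw : w = S.prodW l) :
    S.lenJ J w ≤ l.length :=
  Nat.sInf_le ⟨l, hl, rfl, hw⟩

theorem aux_min_word {J : Set ℕ} {w : V ≃ₗᵢ[ℝ] V} (hw : w ∈ S.WJ J) :
    ∃ l : List ℕ, (∀ k ∈ l, k ∈ J ∩ Set.Icc 1 7) ∧ l.length = S.lenJ J w ∧ w = S.prodW l := by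
  obtain ⟨l₀, hl₀, hw₀⟩ := aux_WJ_word S hw
  have hne : {k | ∃ l : List ℕ, (∀ i ∈ l, i ∈ J ∩ Set.Icc 1 7) ∧ l.length = k ∧
      w = S.prodW l}.Nonempty := ⟨l₀.length, l₀, hl₀, rfl, hw₀⟩
  obtain ⟨l, hl, hlen, hweq⟩ := Nat.sInf_mem hne
  exact ⟨l, hl, hlen, hweq⟩

theorem aux_s_mem_WJ {J : Set ℕ} {i : ℕ} (hi : i ∈ J ∩ Set.Icc 1 7) : S.s i ∈ S.WJ J :=
  Subgroup.subset_closure ⟨i, hi, rfl⟩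

/-- A longest element sends all simple roots of `J` to negative roots. -/
theorem aux_longest_neg {J : Set ℕ} {w : V ≃ₗᵢ[ℝ] V} (hw : S.IsLongest J w) :
    ∀ i ∈ J ∩ Set.Icc 1 7, S.IsNeg (w (S.a i)) := by
  intro i hi
  obtain ⟨lw, hlw, hweq⟩ := aux_WJ_word S hw.1
  have hwR : w (S.a i) ∈ S.R := by
    rw [hweq]
    exact aux_prodW_mem_R S (fun k hk => aux_mem_finIcc (hlw k hk).2)
      (aux_a_mem S i (aux_mem_finIcc hi.2))
  rcases aux_pos_or_neg S hwR with hpos | hneg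
  · exfalso
    set u := w * S.s i with hu
    have huW : u ∈ S.WJ J := mul_mem hw.1 (aux_s_mem_WJ S hi)
    have hulen : S.lenJ J u ≤ S.lenJ J w := hw.2 u huW
    obtain ⟨l, hl, hlen, hueq⟩ := aux_min_word S huW
    have huneg : S.IsNeg (S.prodW l (S.a i)) := by
      rw [← hueq]
      have : u (S.a i) = -(w (S.a i)) := by
        rw [hu, LinearIsometryEquiv.coe_mul, Function.comp_apply,
          aux_s_simple S i (aux_mem_finIcc hi.2), map_neg]
      rw [this]
      exact ⟨by rwa [neg_neg], hpos.2.choose, hpos.2.choose_spec.1, by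
        rw [neg_neg]; exact hpos.2.choose_spec.2⟩
    obtain ⟨l', hl', hlen', heq'⟩ := aux_key S l hl i hi huneg
    have hwl' : w = S.prodW l' := by
      rw [← heq', ← hueq, hu, mul_assoc, aux_s_sq, mul_one]
    have := aux_lenJ_le S hl' hwl'
    omega
  · exact hneg

/-- An element of `W_J` sending all simple roots of `J` to positive roots is the identity. -/
theorem aux_eq_one_of_pos {J : Set ℕ} {u : V ≃ₗᵢ[ℝ] V} (hu : u ∈ S.WJ J)
    (h : ∀ i ∈ J ∩ Set.Icc 1 7, S.IsPos (u (S.a i))) : u = 1 := by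
  obtain ⟨l, hl, hlen, hueq⟩ := aux_min_word S hu
  rcases List.eq_nil_or_concat l with rfl | ⟨l'', i, rfl⟩
  · rw [hueq]; rfl
  · exfalso
    rw [List.concat_eq_append] at hl hlen hueq
    have hi : i ∈ J ∩ Set.Icc 1 7 := hl i (by simp)
    have hl'' : ∀ k ∈ l'', k ∈ J ∩ Set.Icc 1 7 := fun k hk => hl k (by simp [hk])
    have hui : u * S.s i = S.prodW l'' := by
      rw [hueq, aux_prodW_append, aux_prodW_singleton, mul_assoc, aux_s_sq, mul_one]
    have huneg : S.IsNeg (S.prodW l'' (S.a i)) := by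
      rw [← hui]
      have : (u * S.s i) (S.a i) = -(u (S.a i)) := by
        rw [LinearIsometryEquiv.coe_mul, Function.comp_apply,
          aux_s_simple S i (aux_mem_finIcc hi.2), map_neg]
      rw [this]
      have hp := h i hi
      have hpR : u (S.a i) ∈ S.R := hp.1
      exact ⟨by rwa [neg_neg], hp.2.choose, hp.2.choose_spec.1, by
        rw [neg_neg]; exact hp.2.choose_spec.2⟩
    obtain ⟨l''', hl''', hlen', heq'⟩ := aux_key S l'' hl'' i hi huneg
    have hul''' : u = S.prodW l''' := by
      rw [← heq', ← hui, mul_assoc, aux_s_sq, mul_one]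
    have h1 := aux_lenJ_le S hl''' hul'''
    rw [List.length_append, List.length_singleton] at hlen
    omega

end Aux2

section Aux3

open RootSystemWithBase

variable (S : RootSystemWithBase V 7)

/-- The span of the simple roots indexed by `J`. -/
def auxSpanJ (J : Set ℕ) : Submodule ℝ V := Submodule.span ℝ (S.a '' (J ∩ Set.Icc 1 7))

theorem aux_a_mem_spanJ {J : Set ℕ} {i : ℕ} (hi : i ∈ J ∩ Set.Icc 1 7) :
    S.a i ∈ auxSpanJ S J :=
  Submodule.subset_span ⟨i, hi, rfl⟩

theorem aux_prodW_spanJ {J : Set ℕ} {l : List ℕ} (hl : ∀ k ∈ l, k ∈ J ∩ Set.Icc 1 7)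
    {β : V} (hβ : β ∈ auxSpanJ S J) : S.prodW l β ∈ auxSpanJ S J := by
  induction l with
  | nil => simpa [aux_prodW_nil] using hβ
  | cons j t ih =>
    have hjJ : j ∈ J ∩ Set.Icc 1 7 := hl j (List.mem_cons_self ..)
    have h1 : S.prodW t β ∈ auxSpanJ S J := ih fun k hk => hl k (List.mem_cons_of_mem _ hk)
    have : S.prodW (j :: t) β = S.s j (S.prodW t β) := by rw [aux_prodW_cons]; rfl
    rw [this, aux_s_apply]
    exact Submodule.sub_mem _ h1 (Submodule.smul_mem _ _ (aux_a_mem_spanJ S hjJ))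

theorem aux_mem_spanJ_iff {J : Set ℕ} {β : V} :
    β ∈ auxSpanJ S J ↔ ∃ c : ℕ → ℝ, (∀ k ∈ Finset.Icc (1:ℕ) 7, k ∉ J → c k = 0) ∧
      β = ∑ k ∈ Finset.Icc 1 7, c k • S.a k := by
  constructor
  · intro h
    induction h using Submodule.span_induction with
    | mem x hx =>
      obtain ⟨k, hk, rfl⟩ := hx
      refine ⟨fun m => if m = k then 1 else 0, fun m _ hm => by
        rcases eq_or_ne m k with rfl | hne
        · exact absurd hk.1 hm
        · simp [hne], ?_⟩
      rw [Finset.sum_eq_single_of_mem k (aux_mem_finIcc hk.2) (fun m _ hm => by simp [hm])]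
      simp
    | zero => exact ⟨0, by simp, by simp⟩
    | add x y hx hy ihx ihy =>
      obtain ⟨c, hc, rfl⟩ := ihx
      obtain ⟨d, hd, rfl⟩ := ihy
      exact ⟨c + d, fun k hk hkJ => by simp [hc k hk hkJ, hd k hk hkJ], by
        rw [← Finset.sum_add_distrib]
        exact Finset.sum_congr rfl fun k _ => by simp [add_smul]⟩
    | smul r x hx ihx =>
      obtain ⟨c, hc, rfl⟩ := ihx
      exact ⟨fun k => r * c k, fun k hk hkJ => by simp [hc k hk hkJ], by
        rw [Finset.smul_sum]
        exact Finset.sum_congr rfl fun k _ => by rw [smul_smul]⟩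
  · rintro ⟨c, hc, rfl⟩
    refine Submodule.sum_mem _ fun k hk => ?_
    rcases Classical.em (k ∈ J) with hkJ | hkJ
    · exact Submodule.smul_mem _ _ (aux_a_mem_spanJ S ⟨hkJ, by
        simpa [Set.mem_Icc, Finset.mem_Icc] using hk⟩)
    · rw [hc k hk hkJ, zero_smul]; exact Submodule.zero_mem _

/-- If `w ∈ W_J` sends all `J`-simples to negative roots, it sends every positive root
in the `J`-span to a negative root in the `J`-span. -/
theorem aux_maps_neg {J : Set ℕ} {w : V ≃ₗᵢ[ℝ] V} (hw : w ∈ S.WJ J)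
    (hneg : ∀ i ∈ J ∩ Set.Icc 1 7, S.IsNeg (w (S.a i)))
    {β : V} (hβpos : S.IsPos β) (hβspan : β ∈ auxSpanJ S J) :
    S.IsNeg (w β) ∧ w β ∈ auxSpanJ S J := by
  obtain ⟨lw, hlw, hweq⟩ := aux_WJ_word S hw
  have hspan : w β ∈ auxSpanJ S J := by rw [hweq]; exact aux_prodW_spanJ S hlw hβspan
  refine ⟨?_, hspan⟩
  obtain ⟨hβR, c, hc0, hcsum⟩ := hβpos
  obtain ⟨d, hd, hdsum⟩ := (aux_mem_spanJ_iff S).mp hβspan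
  have hcd := aux_coeff_eq S (hcsum ▸ hdsum)
  have hcsupp : ∀ k ∈ Finset.Icc (1:ℕ) 7, k ∉ J → c k = 0 := fun k hk hkJ => by
    rw [hcd k hk]; exact hd k hk hkJ
  -- choose negative expansions for each w (a k)
  have hch : ∀ k : ℕ, ∃ e : ℕ → ℝ, (∀ m, 0 ≤ e m) ∧ (k ∈ Finset.Icc (1:ℕ) 7 →
      c k • w (S.a k) = c k • ∑ m ∈ Finset.Icc 1 7, (-(e m)) • S.a m) := by
    intro k
    rcases Classical.em (c k = 0) with hck | hck
    · exact ⟨0, fun m => le_rfl, fun _ => by simp [hck]⟩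
    · rcases Classical.em (k ∈ Finset.Icc (1:ℕ) 7) with hk | hk
      · have hkJ : k ∈ J := by
          by_contra hkJ
          exact hck (hcsupp k hk hkJ)
        have hkmem : k ∈ J ∩ Set.Icc 1 7 := ⟨hkJ, by
          simpa [Set.mem_Icc, Finset.mem_Icc] using hk⟩
        obtain ⟨_, e, he0, hesum⟩ := hneg k hkmem
        refine ⟨e, he0, fun _ => ?_⟩
        congr 1
        rw [← neg_neg (w (S.a k)), hesum, ← Finset.sum_neg_distrib]
        exact Finset.sum_congr rfl fun m _ => by rw [neg_smul]
      · exact ⟨0, fun m => le_rfl, fun hk' => absurd hk' hk⟩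
  choose e he0 hesum using hch
  have hwβ : w β = ∑ m ∈ Finset.Icc 1 7, (-(∑ k ∈ Finset.Icc 1 7, c k * e k m)) • S.a m := by
    calc w β = ∑ k ∈ Finset.Icc 1 7, c k • w (S.a k) := by
          rw [hcsum, map_sum]; exact Finset.sum_congr rfl fun k _ => by rw [map_smul]
      _ = ∑ k ∈ Finset.Icc 1 7, c k • ∑ m ∈ Finset.Icc 1 7, (-(e k m)) • S.a m :=
          Finset.sum_congr rfl fun k hk => hesum k hk
      _ = ∑ k ∈ Finset.Icc 1 7, ∑ m ∈ Finset.Icc 1 7, (c k * (-(e k m))) • S.a m := by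
          refine Finset.sum_congr rfl fun k _ => ?_
          rw [Finset.smul_sum]
          exact Finset.sum_congr rfl fun m _ => by rw [smul_smul]
      _ = ∑ m ∈ Finset.Icc 1 7, ∑ k ∈ Finset.Icc 1 7, (c k * (-(e k m))) • S.a m :=
          Finset.sum_comm
      _ = ∑ m ∈ Finset.Icc 1 7, (-(∑ k ∈ Finset.Icc 1 7, c k * e k m)) • S.a m := by
          refine Finset.sum_congr rfl fun m _ => ?_
          rw [← Finset.sum_smul]
          congr 1
          rw [← Finset.sum_neg_distrib]
          exact Finset.sum_congr rfl fun k _ => by ring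
  have hwR : w β ∈ S.R := by
    rw [hweq]
    exact aux_prodW_mem_R S (fun k hk => aux_mem_finIcc (hlw k hk).2) hβR
  refine ⟨by simpa using aux_neg_mem S hwR, fun m => ∑ k ∈ Finset.Icc 1 7, c k * e k m,
    fun m => Finset.sum_nonneg fun k _ => mul_nonneg (hc0 k) (he0 k m), ?_⟩
  rw [hwβ, ← Finset.sum_neg_distrib]
  exact Finset.sum_congr rfl fun m _ => by simp

/-- Two elements of `W_J` sending all `J`-simples to negative roots coincide. -/
theorem aux_unique_neg {J : Set ℕ} {w w' : V ≃ₗᵢ[ℝ] V}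
    (hw : w ∈ S.WJ J) (hw' : w' ∈ S.WJ J)
    (hneg : ∀ i ∈ J ∩ Set.Icc 1 7, S.IsNeg (w (S.a i)))
    (hneg' : ∀ i ∈ J ∩ Set.Icc 1 7, S.IsNeg (w' (S.a i))) : w = w' := by
  set PJ : Set V := {β | S.IsPos β ∧ β ∈ auxSpanJ S J} with hPJ
  set NJ : Set V := {β | S.IsNeg β ∧ β ∈ auxSpanJ S J} with hNJ
  have hPfin : PJ.Finite := S.finite.subset fun β hβ => hβ.1.1
  have hNfin : NJ.Finite := S.finite.subset fun β hβ => aux_isNeg_mem S hβ.1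
  have hNP : NJ = Neg.neg '' PJ := by
    ext γ
    constructor
    · rintro ⟨h1, h2⟩
      exact ⟨-γ, ⟨h1, Submodule.neg_mem _ h2⟩, by simp⟩
    · rintro ⟨δ, ⟨h1, h2⟩, rfl⟩
      refine ⟨by simpa [RootSystemWithBase.IsNeg] using h1, Submodule.neg_mem _ h2⟩
  have himg : w' '' PJ = NJ := by
    have hsub : w' '' PJ ⊆ NJ := by
      rintro γ ⟨β, hβ, rfl⟩
      exact aux_maps_neg S hw' hneg' hβ.1 hβ.2
    refine Set.eq_of_subset_of_ncard_le hsub ?_ hNfin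
    rw [hNP, Set.ncard_image_of_injective _ neg_injective,
      Set.ncard_image_of_injective _ w'.injective]
  have hkey : ∀ i ∈ J ∩ Set.Icc 1 7, S.IsPos ((w'⁻¹ * w) (S.a i)) := by
    intro i hi
    have hwi : w (S.a i) ∈ NJ := by
      refine ⟨hneg i hi, ?_⟩
      obtain ⟨lw, hlw, hweq⟩ := aux_WJ_word S hw
      rw [hweq]
      exact aux_prodW_spanJ S hlw (aux_a_mem_spanJ S hi)
    rw [← himg] at hwi
    obtain ⟨δ, hδ, hδeq⟩ := hwi
    have : (w'⁻¹ * w) (S.a i) = δ := by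
      rw [LinearIsometryEquiv.coe_mul, Function.comp_apply, ← hδeq]
      exact w'.symm_apply_apply δ
    rw [this]
    exact hδ.1
  have := aux_eq_one_of_pos S (mul_mem (inv_mem hw') hw) hkey
  have h2 : w'⁻¹ * w = 1 := this
  rw [inv_mul_eq_one] at h2
  exact h2.symm

/-- A longest element of `W_J` equals any word in `W_J` sending all `J`-simples to negatives. -/
theorem aux_longest_eq {J : Set ℕ} {w : V ≃ₗᵢ[ℝ] V} (hw : S.IsLongest J w)
    (L : List ℕ) (hL : ∀ k ∈ L, k ∈ J ∩ Set.Icc 1 7)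
    (hLneg : ∀ i ∈ J ∩ Set.Icc 1 7, S.IsNeg (S.prodW L (S.a i))) : w = S.prodW L :=
  aux_unique_neg S hw.1 (aux_mem_WJ S hL) (aux_longest_neg S hw) hLneg

end Aux3

section Aux4

open RootSystemWithBase

/-! #### The concrete computation layer for `E₇` -/

/-- Coefficient tuples for `E₇`. -/
abbrev V7 : Type := ℤ × ℤ × ℤ × ℤ × ℤ × ℤ × ℤ

/-- The action of the simple reflection `s i` of `E₇` on coefficient tuples. -/
def auxActS : ℕ → V7 → V7
  | 1, (x1,x2,x3,x4,x5,x6,x7) => (-x1+x3,x2,x3,x4,x5,x6,x7)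
  | 2, (x1,x2,x3,x4,x5,x6,x7) => (x1,-x2+x4,x3,x4,x5,x6,x7)
  | 3, (x1,x2,x3,x4,x5,x6,x7) => (x1,x2,-x3+x1+x4,x4,x5,x6,x7)
  | 4, (x1,x2,x3,x4,x5,x6,x7) => (x1,x2,x3,-x4+x2+x3+x5,x5,x6,x7)
  | 5, (x1,x2,x3,x4,x5,x6,x7) => (x1,x2,x3,x4,-x5+x4+x6,x6,x7)
  | 6, (x1,x2,x3,x4,x5,x6,x7) => (x1,x2,x3,x4,x5,-x6+x5+x7,x7)
  | 7, (x1,x2,x3,x4,x5,x6,x7) => (x1,x2,x3,x4,x5,x6,-x7+x6)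
  | _, x => x

/-- The action of a word on coefficient tuples (rightmost letter first). -/
def auxActL (l : List ℕ) (x : V7) : V7 := l.foldr auxActS x

/-- All coordinates nonnegative. -/
def auxNN (x : V7) : Prop := 0 ≤ x.1 ∧ 0 ≤ x.2.1 ∧ 0 ≤ x.2.2.1 ∧ 0 ≤ x.2.2.2.1 ∧
  0 ≤ x.2.2.2.2.1 ∧ 0 ≤ x.2.2.2.2.2.1 ∧ 0 ≤ x.2.2.2.2.2.2

instance (x : V7) : Decidable (auxNN x) := by unfold auxNN; infer_instance

/-- All coordinates nonpositive. -/
def auxNP (x : V7) : Prop := x.1 ≤ 0 ∧ x.2.1 ≤ 0 ∧ x.2.2.1 ≤ 0 ∧ x.2.2.2.1 ≤ 0 ∧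
  x.2.2.2.2.1 ≤ 0 ∧ x.2.2.2.2.2.1 ≤ 0 ∧ x.2.2.2.2.2.2 ≤ 0

instance (x : V7) : Decidable (auxNP x) := by unfold auxNP; infer_instance

/-- The coefficient function of a tuple. -/
def auxCoeff (x : V7) : ℕ → ℝ := fun m =>
  if m = 1 then (x.1 : ℝ) else if m = 2 then (x.2.1 : ℝ) else if m = 3 then (x.2.2.1 : ℝ)
  else if m = 4 then (x.2.2.2.1 : ℝ) else if m = 5 then (x.2.2.2.2.1 : ℝ)
  else if m = 6 then (x.2.2.2.2.2.1 : ℝ) else if m = 7 then (x.2.2.2.2.2.2 : ℝ) else 0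

/-- The standard basis tuples. -/
def auxDl : ℕ → V7 := fun j =>
  if j = 1 then (1,0,0,0,0,0,0) else if j = 2 then (0,1,0,0,0,0,0)
  else if j = 3 then (0,0,1,0,0,0,0) else if j = 4 then (0,0,0,1,0,0,0)
  else if j = 5 then (0,0,0,0,1,0,0) else if j = 6 then (0,0,0,0,0,1,0)
  else if j = 7 then (0,0,0,0,0,0,1) else 0

/-- The integer Gram matrix of `E₇`. -/
def auxG : ℕ → ℕ → ℤ := fun i j =>
  if i = j then 2
  else if (i, j) ∈ ([(1,3),(3,4),(2,4),(4,5),(5,6),(6,7),(7,8)] : List (ℕ × ℕ)) ∨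
      (j, i) ∈ ([(1,3),(3,4),(2,4),(4,5),(5,6),(6,7),(7,8)] : List (ℕ × ℕ)) then -1
  else 0

theorem aux_sum_Icc7 {M : Type*} [AddCommMonoid M] (f : ℕ → M) :
    ∑ k ∈ Finset.Icc 1 7, f k = f 1 + f 2 + f 3 + f 4 + f 5 + f 6 + f 7 := by
  have h : (Finset.Icc 1 7 : Finset ℕ) = {1, 2, 3, 4, 5, 6, 7} := by decide
  rw [h, Finset.sum_insert (by decide), Finset.sum_insert (by decide),
    Finset.sum_insert (by decide), Finset.sum_insert (by decide),
    Finset.sum_insert (by decide), Finset.sum_insert (by decide), Finset.sum_singleton]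
  abel

variable (S : RootSystemWithBase V 7)

/-- Evaluation of a coefficient tuple as a vector in `V`. -/
def auxEv (x : V7) : V := ∑ k ∈ Finset.Icc 1 7, auxCoeff x k • S.a k

theorem aux_gram
    (hE : ∀ i ∈ Finset.Icc 1 7, ∀ j ∈ Finset.Icc 1 7,
      ⟪S.a i, S.a j⟫ = if i = j then 2 else if adjE i j then -1 else 0) :
    ∀ i ∈ Finset.Icc (1:ℕ) 7, ∀ j ∈ Finset.Icc (1:ℕ) 7,
      ⟪S.a i, S.a j⟫ = ((auxG i j : ℤ) : ℝ) := by
  intro i hi j hj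
  rw [hE i hi j hj]
  simp only [Finset.mem_Icc] at hi hj
  obtain ⟨hi1, hi2⟩ := hi
  obtain ⟨hj1, hj2⟩ := hj
  interval_cases i <;> interval_cases j <;> norm_num [adjE, auxG]

theorem aux_ev_expand (x : V7) :
    auxEv S x = (x.1 : ℝ) • S.a 1 + (x.2.1 : ℝ) • S.a 2 + (x.2.2.1 : ℝ) • S.a 3 +
      (x.2.2.2.1 : ℝ) • S.a 4 + (x.2.2.2.2.1 : ℝ) • S.a 5 + (x.2.2.2.2.2.1 : ℝ) • S.a 6 +
      (x.2.2.2.2.2.2 : ℝ) • S.a 7 := by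
  rw [auxEv, aux_sum_Icc7]
  norm_num [auxCoeff]

theorem aux_a_eq_ev : ∀ j ∈ Finset.Icc (1:ℕ) 7, S.a j = auxEv S (auxDl j) := by
  intro j hj
  simp only [Finset.mem_Icc] at hj
  obtain ⟨hj1, hj2⟩ := hj
  interval_cases j <;> (rw [aux_ev_expand]; norm_num [auxDl])

theorem aux_step
    (hE : ∀ i ∈ Finset.Icc 1 7, ∀ j ∈ Finset.Icc 1 7,
      ⟪S.a i, S.a j⟫ = if i = j then 2 else if adjE i j then -1 else 0) :
    ∀ i ∈ Finset.Icc (1:ℕ) 7, ∀ x : V7, S.s i (auxEv S x) = auxEv S (auxActS i x) := by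
  intro i hi x
  have hii : ⟪S.a i, S.a i⟫ = 2 := by
    rw [aux_gram S hE i hi i hi]; norm_num [auxG]
  have hkey : S.s i (auxEv S x) = auxEv S x - ⟪auxEv S x, S.a i⟫ • S.a i := by
    rw [aux_s_apply, hii]
    norm_num
  have hin : ⟪auxEv S x, S.a i⟫ = ∑ k ∈ Finset.Icc 1 7, auxCoeff x k * ((auxG k i : ℤ) : ℝ) := by
    rw [auxEv, sum_inner]
    refine Finset.sum_congr rfl fun k hk => ?_
    rw [real_inner_smul_left, aux_gram S hE k hk i hi]
  rw [hkey, hin, aux_sum_Icc7]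
  obtain ⟨x1, x2, x3, x4, x5, x6, x7⟩ := x
  simp only [Finset.mem_Icc] at hi
  obtain ⟨hi1, hi2⟩ := hi
  interval_cases i <;>
    (rw [aux_ev_expand, aux_ev_expand] <;> norm_num [auxCoeff, auxG, auxActS]) <;>
    (norm_num [auxCoeff, auxG, auxActS]; match_scalars <;> ring)

theorem aux_prodW_ev
    (hE : ∀ i ∈ Finset.Icc 1 7, ∀ j ∈ Finset.Icc 1 7,
      ⟪S.a i, S.a j⟫ = if i = j then 2 else if adjE i j then -1 else 0)
    (l : List ℕ) (hl : ∀ k ∈ l, k ∈ Finset.Icc (1:ℕ) 7) (x : V7) :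
    S.prodW l (auxEv S x) = auxEv S (auxActL l x) := by
  induction l with
  | nil => rw [aux_prodW_nil]; rfl
  | cons i t ih =>
    have h1 : S.prodW (i :: t) (auxEv S x) = S.s i (S.prodW t (auxEv S x)) := by
      rw [aux_prodW_cons]; rfl
    rw [h1, ih fun k hk => hl k (List.mem_cons_of_mem _ hk),
      aux_step S hE i (hl i (List.mem_cons_self ..))]
    rfl

theorem aux_cert_isPos
    (hE : ∀ i ∈ Finset.Icc 1 7, ∀ j ∈ Finset.Icc 1 7,
      ⟪S.a i, S.a j⟫ = if i = j then 2 else if adjE i j then -1 else 0)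
    (L : List ℕ) (hL : ∀ k ∈ L, k ∈ Finset.Icc (1:ℕ) 7)
    (j : ℕ) (hj : j ∈ Finset.Icc (1:ℕ) 7) (hsign : auxNN (auxActL L (auxDl j))) :
    S.IsPos (S.prodW L (S.a j)) := by
  have hmem : S.prodW L (S.a j) ∈ S.R := aux_prodW_mem_R S hL (aux_a_mem S j hj)
  have heq : S.prodW L (S.a j) = auxEv S (auxActL L (auxDl j)) := by
    rw [aux_a_eq_ev S j hj, aux_prodW_ev S hE L hL]
  rw [heq] at hmem ⊢
  obtain ⟨n1, n2, n3, n4, n5, n6, n7⟩ := hsign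
  refine ⟨hmem, auxCoeff (auxActL L (auxDl j)), ?_, rfl⟩
  intro m
  simp only [auxCoeff]
  split_ifs
  · exact_mod_cast n1
  · exact_mod_cast n2
  · exact_mod_cast n3
  · exact_mod_cast n4
  · exact_mod_cast n5
  · exact_mod_cast n6
  · exact_mod_cast n7
  · exact le_rfl

theorem aux_cert_isNeg
    (hE : ∀ i ∈ Finset.Icc 1 7, ∀ j ∈ Finset.Icc 1 7,
      ⟪S.a i, S.a j⟫ = if i = j then 2 else if adjE i j then -1 else 0)
    (L : List ℕ) (hL : ∀ k ∈ L, k ∈ Finset.Icc (1:ℕ) 7)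
    (j : ℕ) (hj : j ∈ Finset.Icc (1:ℕ) 7) (hsign : auxNP (auxActL L (auxDl j))) :
    S.IsNeg (S.prodW L (S.a j)) := by
  have hmem : S.prodW L (S.a j) ∈ S.R := aux_prodW_mem_R S hL (aux_a_mem S j hj)
  have heq : S.prodW L (S.a j) = auxEv S (auxActL L (auxDl j)) := by
    rw [aux_a_eq_ev S j hj, aux_prodW_ev S hE L hL]
  rw [heq] at hmem ⊢
  obtain ⟨n1, n2, n3, n4, n5, n6, n7⟩ := hsign
  refine ⟨aux_neg_mem S hmem, fun m => -(auxCoeff (auxActL L (auxDl j)) m), ?_, ?_⟩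
  · intro m
    simp only [auxCoeff]
    split_ifs
    · simp only [neg_nonneg]; exact_mod_cast n1
    · simp only [neg_nonneg]; exact_mod_cast n2
    · simp only [neg_nonneg]; exact_mod_cast n3
    · simp only [neg_nonneg]; exact_mod_cast n4
    · simp only [neg_nonneg]; exact_mod_cast n5
    · simp only [neg_nonneg]; exact_mod_cast n6
    · simp only [neg_nonneg]; exact_mod_cast n7
    · simp
  · rw [auxEv, ← Finset.sum_neg_distrib]
    exact Finset.sum_congr rfl fun k _ => by rw [neg_smul]

/-- Explicit words. -/
def auxV4w : List ℕ := [1, 3, 4, 5, 2, 4, 3, 6, 5, 4, 1, 2, 3, 7, 6, 5, 4]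
def auxWa : List ℕ :=
  [2, 3, 4, 2, 3, 4, 5, 4, 2, 3, 4, 5, 6, 5, 4, 2, 3, 4, 5, 6, 7, 6, 5, 4, 2, 3, 4, 5, 6, 7]
def auxWb : ℕ → List ℕ := fun i =>
  if i = 1 then auxWa
  else if i = 2 then [3, 4, 3, 5, 4, 3, 6, 5, 4, 3, 7, 6, 5, 4, 3]
  else if i = 3 then [2, 4, 2, 5, 4, 2, 6, 5, 4, 2, 7, 6, 5, 4, 2]
  else if i = 4 then [2, 3, 5, 6, 5, 7, 6, 5]
  else if i = 5 then [2, 3, 4, 2, 3, 4, 6, 7, 6]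
  else if i = 6 then [2, 3, 4, 2, 3, 4, 5, 4, 2, 3, 4, 5, 7]
  else []

end Aux4


/-- Decidable certificate facts, verified by kernel computation. -/
theorem auxD1 : ∀ c ∈ Finset.Icc (1:ℕ) 6, ∀ k ∈ auxWb c,
    k ∈ Finset.Icc (1:ℕ) 7 ∧ 2 ≤ k ∧ k ≠ c := by decide

theorem auxD2 : ∀ k ∈ auxWa, k ∈ Finset.Icc (1:ℕ) 7 ∧ 2 ≤ k := by decide

theorem auxD3 : ∀ m ∈ Finset.Icc (2:ℕ) 7, auxNP (auxActL auxWa (auxDl m)) := by decide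

theorem auxD4 : ∀ c ∈ Finset.Icc (1:ℕ) 6, ∀ m ∈ Finset.Icc (2:ℕ) 7, m ≠ c →
    auxNP (auxActL (auxWb c) (auxDl m)) := by decide

theorem auxD5 : ∀ c ∈ Finset.Icc (1:ℕ) 6, ∀ j ∈ Finset.Icc (1:ℕ) 7, j ≠ c →
    auxNN (auxActL ((auxWb c ++ auxWa ++ auxV4w).reverse) (auxDl j)) := by decide

theorem auxD6 : ∀ c ∈ Finset.Icc (1:ℕ) 6,
    auxNP (auxActL ((auxWb c ++ auxWa ++ auxV4w).reverse) (auxDl c)) := by decide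

theorem auxD7 : ∀ c ∈ Finset.Icc (1:ℕ) 6, ∀ k ∈ (auxWb c ++ auxWa ++ auxV4w).reverse,
    k ∈ Finset.Icc (1:ℕ) 7 := by decide

/-- In type `E_7`, with `v_4` as above and
`w_i = w_{0, S∖{α_1, α_i}} w_{0, S∖{α_1}} v_4` for `i ≠ 7` (so `w_1 = v_4`): for every
`i ∈ {1, …, 6}`, `w_i⁻¹(α_j)` is a positive root for all `j ≠ i`, and `w_i⁻¹(α_i)` is a
negative root. -/
theorem statement16 (S : RootSystemWithBase V 7)
    (hE : ∀ i ∈ Finset.Icc 1 7, ∀ j ∈ Finset.Icc 1 7,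
      ⟪S.a i, S.a j⟫ = if i = j then 2 else if adjE i j then -1 else 0) :
    ∀ i ∈ Finset.Icc 1 6,
    ∀ w0a : V ≃ₗᵢ[ℝ] V, S.IsLongest (Set.Icc 1 7 \ {1}) w0a →
    ∀ w0b : V ≃ₗᵢ[ℝ] V, S.IsLongest (Set.Icc 1 7 \ {1, i}) w0b →
      (∀ j ∈ Finset.Icc 1 7, j ≠ i →
        S.IsPos ((w0b * w0a * v4E7 S)⁻¹ (S.a j))) ∧
      S.IsNeg ((w0b * w0a * v4E7 S)⁻¹ (S.a i)) := by
  intro i hi w0a hw0a w0b hw0b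
  rw [Finset.mem_Icc] at hi
  obtain ⟨hi1, hi6⟩ := hi
  have hiF : i ∈ Finset.Icc (1:ℕ) 6 := Finset.mem_Icc.mpr ⟨hi1, hi6⟩
  -- identify `w0a` with the explicit word `auxWa`
  have hwaL : ∀ k ∈ auxWa, k ∈ (Set.Icc 1 7 \ {1} : Set ℕ) ∩ Set.Icc 1 7 := by
    intro k hk
    obtain ⟨hkF, hk2⟩ := auxD2 k hk
    rw [Finset.mem_Icc] at hkF
    simp only [Set.mem_inter_iff, Set.mem_diff, Set.mem_Icc, Set.mem_singleton_iff]
    omega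
  have hnegA : ∀ m ∈ (Set.Icc 1 7 \ {1} : Set ℕ) ∩ Set.Icc 1 7,
      S.IsNeg (S.prodW auxWa (S.a m)) := by
    intro m hm
    simp only [Set.mem_inter_iff, Set.mem_diff, Set.mem_Icc, Set.mem_singleton_iff] at hm
    refine aux_cert_isNeg S hE auxWa (fun k hk => (auxD2 k hk).1) m
      (Finset.mem_Icc.mpr ⟨by omega, by omega⟩) (auxD3 m (Finset.mem_Icc.mpr ⟨by omega, by omega⟩))
  have hwa : w0a = S.prodW auxWa := aux_longest_eq S hw0a auxWa hwaL hnegA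
  -- identify `w0b` with the explicit word `auxWb i`
  have hbL : ∀ k ∈ auxWb i, k ∈ (Set.Icc 1 7 \ {1, i} : Set ℕ) ∩ Set.Icc 1 7 := by
    intro k hk
    obtain ⟨hkF, hk2, hki⟩ := auxD1 i hiF k hk
    rw [Finset.mem_Icc] at hkF
    simp only [Set.mem_inter_iff, Set.mem_diff, Set.mem_Icc, Set.mem_insert_iff,
      Set.mem_singleton_iff]
    constructor
    · exact ⟨⟨by omega, by omega⟩, by push_neg; exact ⟨by omega, hki⟩⟩
    · exact ⟨by omega, by omega⟩
  have hnegB : ∀ m ∈ (Set.Icc 1 7 \ {1, i} : Set ℕ) ∩ Set.Icc 1 7,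
      S.IsNeg (S.prodW (auxWb i) (S.a m)) := by
    intro m hm
    simp only [Set.mem_inter_iff, Set.mem_diff, Set.mem_Icc, Set.mem_insert_iff,
      Set.mem_singleton_iff] at hm
    obtain ⟨⟨⟨hm1, hm7⟩, hmne⟩, -⟩ := hm
    push_neg at hmne
    obtain ⟨hmne1, hmnei⟩ := hmne
    refine aux_cert_isNeg S hE (auxWb i) (fun k hk => (auxD1 i hiF k hk).1) m
      (Finset.mem_Icc.mpr ⟨by omega, by omega⟩)
      (auxD4 i hiF m (Finset.mem_Icc.mpr ⟨by omega, by omega⟩) hmnei)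
  have hwb : w0b = S.prodW (auxWb i) := aux_longest_eq S hw0b (auxWb i) hbL hnegB
  have hinv : (w0b * w0a * v4E7 S)⁻¹ = S.prodW ((auxWb i ++ auxWa ++ auxV4w).reverse) := by
    rw [hwa, hwb, show v4E7 S = S.prodW auxV4w from rfl, ← aux_prodW_append,
      ← aux_prodW_append, aux_prodW_inv]
  constructor
  · intro j hj hne
    rw [hinv]
    exact aux_cert_isPos S hE _ (auxD7 i hiF) j hj (auxD5 i hiF j hj hne)
  · rw [hinv]
    exact aux_cert_isNeg S hE _ (auxD7 i hiF) i
      (Finset.mem_Icc.mpr ⟨hi1, by omega⟩) (auxD6 i hiF)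

end PaperFormal
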